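/- Let n ≥ 1, u ≥ 0, w ≥ 1, let i ∈ {1,…,n}, and fix e ∈ F_2^n with Hamming weight wt(e) = u and e_i = 0. Then the number of vectors h ∈ F_2^n with wt(h) = w, h_i = 1, and ⟨h,e⟩ = 1 over F_2 equals Σ_{ℓ odd, 1 ≤ ℓ ≤ min(w−1, u)} C(u, ℓ)·C(n−1−u, w−1−ℓ). -/

import Mathlib

open Finset

lemma zmod2_cases (x : ZMod 2) : x = 0 ∨ x = 1 := by revert x; decide

lemma zmod2_ne_zero (x : ZMod 2) : x ≠ 0 ↔ x = 1 := by revert x; decide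

lemma zmod2_natCast_eq_one (m : ℕ) : (m : ZMod 2) = 1 ↔ Odd m := by
  rw [Nat.odd_iff, show (1 : ZMod 2) = ((1 : ℕ) : ZMod 2) by norm_num,
    ZMod.natCast_eq_natCast_iff, Nat.ModEq]

/-- for `e ∈ F₂ⁿ` with `wt(e) = u` and `e i = 0`, the number of
`h ∈ F₂ⁿ` with `wt(h) = w`, `h i = 1` and `⟨h,e⟩ = 1` equals
`Σ_{ℓ odd, 1 ≤ ℓ ≤ min(w−1,u)} C(u,ℓ)·C(n−1−u,w−1−ℓ)`. -/
theorem unsatisfied_check_count_error_free_bit (n u w : ℕ)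
    (hn : 1 ≤ n) (hw : 1 ≤ w)
    (i : Fin n) (e : Fin n → ZMod 2)
    (hewt : (univ.filter (fun j : Fin n => e j ≠ 0)).card = u)
    (hei : e i = 0) :
    (univ.filter (fun h : Fin n → ZMod 2 =>
        (univ.filter (fun j : Fin n => h j ≠ 0)).card = w ∧ h i = 1 ∧
          ∑ j : Fin n, h j * e j = 1)).card
      = ∑ l ∈ Finset.range (min (w - 1) u + 1),
          if Odd l then Nat.choose u l * Nat.choose (n - 1 - u) (w - 1 - l) else 0 := by
  classical
  set E : Finset (Fin n) := univ.filter (fun j : Fin n => e j ≠ 0) with hE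
  have hiE : i ∉ E := by simp [hE, hei]
  set T : Finset (Fin n) := univ \ insert i E with hT
  have hTcard : T.card = n - 1 - u := by
    rw [hT, card_sdiff_of_subset (subset_univ _), card_insert_of_notMem hiE, hewt]
    simp [Fintype.card_fin]; omega
  clear_value T E
  -- Step 1: express the inner-product condition via parity of |S ∩ E|
  have hsum : ∀ h : Fin n → ZMod 2,
      (∑ j : Fin n, h j * e j = 1) ↔
        Odd ((univ.filter (fun j : Fin n => h j ≠ 0)) ∩ E).card := by
    intro h
    have : ∑ j : Fin n, h j * e j
        = ((univ.filter (fun j : Fin n => h j ≠ 0 ∧ e j ≠ 0)).card : ZMod 2) := by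
      rw [← Finset.sum_boole]
      refine Finset.sum_congr rfl fun j _ => ?_
      rcases zmod2_cases (h j) with h1 | h1 <;> rcases zmod2_cases (e j) with h2 | h2 <;>
        simp [h1, h2]
    rw [this, zmod2_natCast_eq_one]
    congr 2
    rw [hE, ← Finset.filter_and]
  -- Step 2: biject functions with finsets (supports)
  have step2 : (univ.filter (fun h : Fin n → ZMod 2 =>
        (univ.filter (fun j : Fin n => h j ≠ 0)).card = w ∧ h i = 1 ∧
          ∑ j : Fin n, h j * e j = 1)).card
      = (univ.filter (fun S : Finset (Fin n) =>
          S.card = w ∧ i ∈ S ∧ Odd ((S ∩ E).card))).card := by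
    refine card_nbij' (fun h => univ.filter (fun j => h j ≠ 0))
      (fun S => fun j => if j ∈ S then 1 else 0) ?_ ?_ ?_ ?_
    · intro h hh
      simp only [coe_filter, Set.mem_setOf_eq, mem_filter, mem_univ, true_and] at hh ⊢
      obtain ⟨h1, h2, h3⟩ := hh
      refine ⟨h1, ?_, (hsum h).mp h3⟩
      simp [h2]
    · intro S hS
      simp only [coe_filter, Set.mem_setOf_eq, mem_filter, mem_univ, true_and] at hS ⊢
      obtain ⟨h1, h2, h3⟩ := hS
      have hfe : (univ.filter (fun j : Fin n =>
          (if j ∈ S then (1 : ZMod 2) else 0) ≠ 0)) = S := by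
        ext j; by_cases hj : j ∈ S <;> simp [hj]
      refine ⟨by rw [hfe, h1], by simp [h2], ?_⟩
      rw [hsum, hfe]; exact h3
    · intro h hh
      funext j
      rcases zmod2_cases (h j) with h1 | h1 <;> simp [h1]
    · intro S hS
      ext j; by_cases hj : j ∈ S <;> simp [hj]
  rw [step2]
  clear hsum step2
  -- Step 3: fiber by ℓ = |S ∩ E|
  have hfib : ∀ S ∈ (univ.filter (fun S : Finset (Fin n) =>
      S.card = w ∧ i ∈ S ∧ Odd ((S ∩ E).card))),
      (S ∩ E).card ∈ Finset.range (min (w - 1) u + 1) := by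
    intro S hS
    simp only [mem_filter, mem_univ, true_and] at hS
    obtain ⟨h1, h2, _⟩ := hS
    have hle1 : (S ∩ E).card ≤ u := by
      rw [← hewt]; exact card_le_card (inter_subset_right)
    have hle2 : (S ∩ E).card ≤ w - 1 := by
      have hsub : S ∩ E ⊆ S.erase i := by
        intro j hj
        simp only [mem_inter] at hj
        refine mem_erase.mpr ⟨?_, hj.1⟩
        rintro rfl; exact hiE hj.2
      calc (S ∩ E).card ≤ (S.erase i).card := card_le_card hsub
        _ = w - 1 := by rw [card_erase_of_mem h2, h1]
    simp only [Finset.mem_range]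
    omega
  rw [Finset.card_eq_sum_card_fiberwise hfib]
  -- Step 4: compute each fiber
  refine Finset.sum_congr rfl fun l hl => ?_
  simp only [Finset.mem_range] at hl
  have hlw : l ≤ w - 1 := by omega
  by_cases hodd : Odd l
  · rw [if_pos hodd]
    have : ((univ.filter (fun S : Finset (Fin n) =>
          S.card = w ∧ i ∈ S ∧ Odd ((S ∩ E).card))).filter
          (fun S => (S ∩ E).card = l)).card
        = (E.powersetCard l ×ˢ T.powersetCard (w - 1 - l)).card := by
      refine card_nbij' (fun S => (S ∩ E, S ∩ T))
        (fun p => insert i (p.1 ∪ p.2)) ?_ ?_ ?_ ?_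
      · intro S hS
        simp only [mem_coe, mem_filter, mem_univ, true_and] at hS
        obtain ⟨⟨h1, h2, _⟩, h4⟩ := hS
        have hST : S ∩ T = (S.erase i) \ E := by
          ext j
          simp only [hT, mem_inter, mem_sdiff, mem_erase, mem_univ, mem_insert,
            true_and, not_or]
          tauto
        have hSiE : (S.erase i) ∩ E = S ∩ E := by
          ext j
          simp only [mem_inter, mem_erase]
          constructor
          · rintro ⟨⟨_, hj⟩, hjE⟩; exact ⟨hj, hjE⟩
          · rintro ⟨hj, hjE⟩; exact ⟨⟨fun h => hiE (h ▸ hjE), hj⟩, hjE⟩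
        have hkey : ((S.erase i) ∩ E).card + ((S.erase i) \ E).card = w - 1 := by
          rw [Finset.card_inter_add_card_sdiff, card_erase_of_mem h2, h1]
        rw [hSiE, h4] at hkey
        simp only [mem_coe, Finset.mem_product, Finset.mem_powersetCard]
        exact ⟨⟨inter_subset_right, h4⟩, ⟨inter_subset_right, by rw [hST]; omega⟩⟩
      · rintro ⟨A, B⟩ hp
        simp only [mem_coe, Finset.mem_product, Finset.mem_powersetCard] at hp
        obtain ⟨⟨hAE, hAc⟩, hBT, hBc⟩ := hp
        have hiA : i ∉ A := fun h => hiE (hAE h)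
        have hiB : i ∉ B := fun h => by
          have := hBT h; rw [hT] at this
          simp at this
        have hAB : Disjoint A B := by
          refine Finset.disjoint_left.mpr fun j hjA hjB => ?_
          have := hBT hjB; rw [hT] at this
          simp only [mem_sdiff, mem_insert, not_or] at this
          exact this.2.2 (hAE hjA)
        have hinterE : insert i (A ∪ B) ∩ E = A := by
          ext j
          simp only [mem_inter, mem_insert, mem_union]
          constructor
          · rintro ⟨(rfl | hjA | hjB), hjE⟩
            · exact absurd hjE hiE
            · exact hjA
            · exfalso
              have := hBT hjB; rw [hT] at this
              simp only [mem_sdiff, mem_insert, not_or] at this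
              exact this.2.2 hjE
          · intro hjA; exact ⟨Or.inr (Or.inl hjA), hAE hjA⟩
        simp only [mem_coe, mem_filter, mem_univ, true_and]
        refine ⟨⟨?_, mem_insert_self _ _, ?_⟩, ?_⟩
        · rw [card_insert_of_notMem (by simp [hiA, hiB]),
            card_union_of_disjoint hAB, hAc, hBc]
          omega
        · rw [hinterE, hAc]; exact hodd
        · rw [hinterE]; exact hAc
      · intro S hS
        simp only [mem_coe, mem_filter, mem_univ, true_and] at hS
        obtain ⟨⟨h1, h2, _⟩, _⟩ := hS
        ext j
        simp only [mem_insert, mem_union, mem_inter, hT, mem_sdiff, mem_univ,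
          true_and, mem_insert, not_or]
        constructor
        · rintro (rfl | ⟨hj, _⟩ | ⟨hj, _⟩) <;> first | exact h2 | exact hj
        · intro hj
          by_cases hji : j = i
          · exact Or.inl hji
          · by_cases hjE : j ∈ E
            · exact Or.inr (Or.inl ⟨hj, hjE⟩)
            · exact Or.inr (Or.inr ⟨hj, hji, hjE⟩)
      · rintro ⟨A, B⟩ hp
        simp only [mem_coe, Finset.mem_product, Finset.mem_powersetCard] at hp
        obtain ⟨⟨hAE, hAc⟩, hBT, hBc⟩ := hp
        have hiA : i ∉ A := fun h => hiE (hAE h)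
        have hiB : i ∉ B := fun h => by
          have := hBT h; rw [hT] at this; simp at this
        have hBE : ∀ j ∈ B, j ∉ E := by
          intro j hj
          have := hBT hj; rw [hT] at this
          simp only [mem_sdiff, mem_insert, not_or] at this
          exact this.2.2
        have hAT : ∀ j ∈ A, j ∉ T := by
          intro j hj hjT
          rw [hT] at hjT
          simp only [mem_sdiff, mem_insert, not_or] at hjT
          exact hjT.2.2 (hAE hj)
        have hiT : i ∉ T := by rw [hT]; simp
        simp only [Prod.mk.injEq]
        constructor
        · ext j
          simp only [mem_inter, mem_insert, mem_union]
          constructor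
          · rintro ⟨(rfl | hjA | hjB), hjE⟩
            · exact absurd hjE hiE
            · exact hjA
            · exact absurd hjE (hBE j hjB)
          · intro hj; exact ⟨Or.inr (Or.inl hj), hAE hj⟩
        · ext j
          simp only [mem_inter, mem_insert, mem_union]
          constructor
          · rintro ⟨(rfl | hjA | hjB), hjT⟩
            · exact absurd hjT hiT
            · exact absurd hjT (hAT j hjA)
            · exact hjB
          · intro hj; exact ⟨Or.inr (Or.inr hj), hBT hj⟩
    rw [this, Finset.card_product, Finset.card_powersetCard, Finset.card_powersetCard,
      hewt, hTcard]
  · rw [if_neg hodd]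
    rw [Finset.card_eq_zero, Finset.filter_eq_empty_iff]
    intro S hS
    simp only [mem_filter, mem_univ, true_and] at hS
    intro hcontra
    exact hodd (hcontra ▸ hS.2.2)
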